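/- For all t > 1 and β > 1, one has ψ''(t)·ψ'(βt) − β·ψ'(t)·ψ''(βt) > 0, where ψ(t) = (1/2)(2t² + 1/t² − 5) + e^{1/t−1}. -/

import Mathlib

noncomputable def psi (t : ℝ) : ℝ :=
  (1/2) * (2*t^2 + 1/t^2 - 5) + Real.exp (1/t - 1)

noncomputable def psiD (t : ℝ) : ℝ := 2*t - 1/t^3 - Real.exp (1/t - 1)/t^2

noncomputable def psiDD (t : ℝ) : ℝ :=
  2 + 3/t^4 + (2/t^3 + 1/t^4) * Real.exp (1/t - 1)

lemma hasDerivAt_psi {t : ℝ} (ht : t ≠ 0) : HasDerivAt psi (psiD t) t := by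
  have h1 : HasDerivAt (fun x : ℝ => 1/x - 1) (-1/t^2) t := by
    simpa using ((hasDerivAt_inv ht).sub_const 1).congr_deriv (by field_simp)
  have h2 : HasDerivAt (fun x : ℝ => Real.exp (1/x - 1))
      (Real.exp (1/t - 1) * (-1/t^2)) t := (Real.hasDerivAt_exp _).comp t h1
  have h3 : HasDerivAt (fun x : ℝ => (1/2) * (2*x^2 + 1/x^2 - 5))
      ((1/2) * (2*(2*t) + (-(2*t)/(t^2)^2))) t := by
    have hp : HasDerivAt (fun x : ℝ => x^2) (2*t) t := by
      simpa using hasDerivAt_pow 2 t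
    have hi : HasDerivAt (fun x : ℝ => 1/x^2) (-(2*t)/(t^2)^2) t := by
      simpa [one_div] using (hp.fun_inv (pow_ne_zero 2 ht))
    exact (((hp.const_mul 2).add hi).sub_const 5).const_mul (1/2)
  have := h3.add h2
  refine this.congr_deriv ?_
  unfold psiD
  field_simp
  ring

lemma hasDerivAt_psiD {t : ℝ} (ht : t ≠ 0) : HasDerivAt psiD (psiDD t) t := by
  have h1 : HasDerivAt (fun x : ℝ => 1/x - 1) (-1/t^2) t := by
    simpa using ((hasDerivAt_inv ht).sub_const 1).congr_deriv (by field_simp)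
  have h2 : HasDerivAt (fun x : ℝ => Real.exp (1/x - 1))
      (Real.exp (1/t - 1) * (-1/t^2)) t := (Real.hasDerivAt_exp _).comp t h1
  have hp3 : HasDerivAt (fun x : ℝ => x^3) (3*t^2) t := by
    simpa using hasDerivAt_pow 3 t
  have hi3 : HasDerivAt (fun x : ℝ => 1/x^3) (-(3*t^2)/(t^3)^2) t := by
    simpa [one_div] using (hp3.fun_inv (pow_ne_zero 3 ht))
  have hp2 : HasDerivAt (fun x : ℝ => x^2) (2*t) t := by
    simpa using hasDerivAt_pow 2 t
  have hq : HasDerivAt (fun x : ℝ => Real.exp (1/x - 1)/x^2)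
      ((Real.exp (1/t - 1) * (-1/t^2) * t^2 - Real.exp (1/t - 1) * (2*t)) / (t^2)^2) t :=
    h2.div hp2 (pow_ne_zero 2 ht)
  have hlin : HasDerivAt (fun x : ℝ => 2*x) 2 t := by
    simpa using (hasDerivAt_id t).const_mul 2
  have := (hlin.sub hi3).sub hq
  refine this.congr_deriv ?_
  unfold psiDD
  field_simp
  ring

lemma deriv_psi_eq {t : ℝ} (ht : t ≠ 0) : deriv psi t = psiD t := (hasDerivAt_psi ht).deriv

lemma deriv2_psi_eq {t : ℝ} (ht : t ≠ 0) : deriv (deriv psi) t = psiDD t := by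
  have hev : deriv psi =ᶠ[nhds t] psiD := by
    filter_upwards [isOpen_ne.mem_nhds (x := t) ht] with x hx
    exact deriv_psi_eq hx
  rw [hev.deriv_eq]
  exact (hasDerivAt_psiD ht).deriv

theorem stmt_8 : ∀ t β : ℝ, 1 < t → 1 < β →
    deriv (deriv psi) t * deriv psi (β * t)
      - β * deriv psi t * deriv (deriv psi) (β * t) > 0 := by
  intro t β ht hβ
  have ht0 : (0:ℝ) < t := lt_trans one_pos ht
  have hβ0 : (0:ℝ) < β := lt_trans one_pos hβ
  set s : ℝ := β * t with hs
  have hts : t < s := by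
    have := mul_lt_mul_of_pos_right hβ ht0
    simpa [hs] using this
  have hs0 : (0:ℝ) < s := lt_trans ht0 hts
  rw [deriv2_psi_eq (ne_of_gt ht0), deriv2_psi_eq (ne_of_gt hs0),
      deriv_psi_eq (ne_of_gt ht0), deriv_psi_eq (ne_of_gt hs0)]
  set E := Real.exp (1/t - 1) with hE
  set F := Real.exp (1/s - 1) with hF
  have hF0 : 0 < F := Real.exp_pos _
  have hE1 : E ≤ 1 := by
    rw [hE, Real.exp_le_one_iff]
    have : 1/t ≤ 1 := by
      rw [div_le_one ht0]; linarith
    linarith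
  have hFE : F ≤ E := by
    apply Real.exp_le_exp.2
    have : 1/s ≤ 1/t := by
      apply one_div_le_one_div_of_le ht0 (le_of_lt hts)
    linarith
  have hβt : β = s / t := by field_simp [hs]; exact hs.symm
  have hs1 : (1:ℝ) < s := lt_trans ht hts
  have hts1 : (1:ℝ) ≤ t*s := by nlinarith [mul_lt_mul_of_pos_left hs1 ht0]
  have hE0 : 0 < E := Real.exp_pos _
  have hF1 : F ≤ 1 := le_trans hFE hE1
  have hA : (0:ℝ) ≤ 6*s*t^4 + 2*t^4 + s - 1 := by
    nlinarith [mul_pos hs0 (pow_pos ht0 4), pow_pos ht0 4]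
  have hC : (0:ℝ) ≤ 6*t*s*(s^2+s*t+t^2) + 2*(s+t)*(s^2+t^2) - 2 := by
    nlinarith [sq_nonneg (t*s-1), hts1,
      mul_nonneg (mul_nonneg ht0.le hs0.le) (add_nonneg (sq_nonneg s) (sq_nonneg t)),
      mul_nonneg (add_nonneg ht0.le hs0.le) (add_nonneg (sq_nonneg s) (sq_nonneg t))]
  have h1 : (0:ℝ) ≤ (6*s*t^4 + 2*t^4 + s - 1) * (E - F) :=
    mul_nonneg hA (sub_nonneg.2 hFE)
  have h2 : (0:ℝ) ≤ (s - t) * E * (1 - F) :=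
    mul_nonneg (mul_nonneg (sub_nonneg.2 hts.le) hE0.le) (sub_nonneg.2 hF1)
  have h3 : (0:ℝ) ≤ (s - t) * (6*t*s*(s^2+s*t+t^2) + 2*(s+t)*(s^2+t^2) - 2) * E :=
    mul_nonneg (mul_nonneg (sub_nonneg.2 hts.le) hC) hE0.le
  have h4 : (0:ℝ) < 8*(s^4 - t^4) := by
    nlinarith [pow_lt_pow_left₀ hts ht0.le (by norm_num : (4:ℕ) ≠ 0)]
  have key : 0 < 8*(s^4 - t^4) + (6*t*s^4 + 2*s^4 + t - 1)*E
      - (6*s*t^4 + 2*t^4 + s - 1)*F + (t - s)*E*F := by nlinarith [h1, h2, h3, h4]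
  have heq : psiDD t * psiD s - β * psiD t * psiDD s
      = (8*(s^4 - t^4) + (6*t*s^4 + 2*s^4 + t - 1)*E
      - (6*s*t^4 + 2*t^4 + s - 1)*F + (t - s)*E*F) / (t^4 * s^3) := by
    rw [hβt]
    unfold psiDD psiD
    rw [← hE, ← hF]
    field_simp
    ring
  rw [heq]
  positivity
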